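/- arXiv:1411.0210 — 2 statements merged into one kernel-verified Lean document; each statement's English description precedes it below -/
import Mathlib

section
/- Let A be a symmetric n×n real matrix and M = S·A^L·T. Suppose a_{ij} > a_{ik} whenever j < k < i, and a_{ij} < a_{ik} whenever i < j < k. Then every off-diagonal entry of M is strictly positive. -/
open Matrix Finset

/-- The (n)×(n+1) difference matrix: `S i i = -1`, `S i (i+1) = 1`, else `0`. -/
noncomputable def Smat (n : ℕ) : Matrix (Fin n) (Fin (n + 1)) ℝ :=
  Matrix.of fun i j => if (j : ℕ) = (i : ℕ) then -1 else if (j : ℕ) = (i : ℕ) + 1 then 1 else 0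

/-- The (n+1)×n cumulative-sum matrix: `T i j = 1` iff `j < i`. -/
noncomputable def Tmat (n : ℕ) : Matrix (Fin (n + 1)) (Fin n) ℝ :=
  Matrix.of fun i j => if (j : ℕ) < (i : ℕ) then 1 else 0

/-- The Laplacian associated with a symmetric matrix `A`:
off-diagonal entries `-A i j`, diagonal entry `∑_{k ≠ i} A i k`. -/
noncomputable def lap {m : Type*} [Fintype m] [DecidableEq m] (A : Matrix m m ℝ) :
    Matrix m m ℝ :=
  Matrix.of fun i j => if i = j then ∑ k ∈ Finset.univ.filter (fun k => k ≠ i), A i k else -A i j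

lemma lap_rowsum {m : Type*} [Fintype m] [DecidableEq m] (A : Matrix m m ℝ) (p : m) :
    ∑ q, lap A p q = 0 := by
  rw [← Finset.add_sum_erase _ _ (Finset.mem_univ p),
      Finset.sum_congr rfl (fun q hq => show lap A p q = -A p q by
        simp only [lap, of_apply, if_neg (Ne.symm (Finset.mem_erase.mp hq).1)])]
  simp only [lap, of_apply, if_pos rfl, Finset.sum_neg_distrib]
  rw [show Finset.univ.filter (fun k => k ≠ p) = Finset.univ.erase p by
    ext; simp [Finset.mem_erase, and_comm]]
  simp

lemma SL_apply (n : ℕ) (A : Matrix (Fin (n + 1)) (Fin (n + 1)) ℝ) (i : Fin n)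
    (q : Fin (n + 1)) :
    (Smat n * lap A) i q = lap A i.succ q - lap A i.castSucc q := by
  rw [Matrix.mul_apply]
  have hf : ∀ p : Fin (n + 1), Smat n i p * lap A p q =
      (if p = i.succ then lap A i.succ q else 0) -
        (if p = i.castSucc then lap A i.castSucc q else 0) := by
    intro p
    simp only [Smat, of_apply]
    by_cases h0 : (p : ℕ) = (i : ℕ)
    · have hp : p = i.castSucc := by ext; simpa using h0
      have hp2 : p ≠ i.succ := by
        rw [hp]; exact (Fin.castSucc_lt_succ (i := i)).ne
      rw [if_pos h0, if_neg hp2, if_pos hp, hp]; ring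
    · by_cases h1 : (p : ℕ) = (i : ℕ) + 1
      · have hp : p = i.succ := by ext; simpa using h1
        have hp2 : p ≠ i.castSucc := by
          rw [hp]; exact (Fin.castSucc_lt_succ (i := i)).ne'
        rw [if_neg h0, if_pos h1, if_pos hp, if_neg hp2, hp]; ring
      · have hp : p ≠ i.succ := fun h => h1 (by rw [h]; simp)
        have hp2 : p ≠ i.castSucc := fun h => h0 (by rw [h]; simp)
        rw [if_neg h0, if_neg h1, if_neg hp, if_neg hp2]; ring
  rw [Finset.sum_congr rfl (fun p _ => hf p), Finset.sum_sub_distrib,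
      Finset.sum_ite_eq' Finset.univ i.succ, Finset.sum_ite_eq' Finset.univ i.castSucc]
  simp

theorem offdiag_pos (n : ℕ) (A : Matrix (Fin (n + 1)) (Fin (n + 1)) ℝ)
    (hA : A.IsSymm)
    (h1 : ∀ i j k : Fin (n + 1), (j : ℕ) < k → (k : ℕ) < i → A i k < A i j)
    (h2 : ∀ i j k : Fin (n + 1), (i : ℕ) < j → (j : ℕ) < k → A i j < A i k) :
    ∀ i j : Fin n, i ≠ j → 0 < (Smat n * lap A * Tmat n) i j := by
  intro i j hij
  have hsym : ∀ a b : Fin (n + 1), A a b = A b a := fun a b => (hA.apply a b).symm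
  set d : Fin (n + 1) → ℝ := fun q => lap A i.succ q - lap A i.castSucc q with hd
  have key : (Smat n * lap A * Tmat n) i j =
      ∑ q : Fin (n+1), (if (j : ℕ) < (q : ℕ) then d q else 0) := by
    rw [Matrix.mul_apply]
    refine Finset.sum_congr rfl fun q _ => ?_
    rw [SL_apply, show Tmat n q j = if (j : ℕ) < (q : ℕ) then 1 else 0 from rfl]
    rw [mul_ite, mul_one, mul_zero]
  rcases lt_or_gt_of_ne (fun h : (i : ℕ) = (j : ℕ) => hij (Fin.ext h)) with hlt | hgt
  · -- i < j : positive terms with q > j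
    rw [key, ← Finset.sum_filter]
    apply Finset.sum_pos
    · intro q hq
      have hjq : (j : ℕ) < (q : ℕ) := (Finset.mem_filter.mp hq).2
      have hq1 : (i : ℕ) + 1 < (q : ℕ) := by omega
      have hne1 : i.succ ≠ q := fun h => by
        rw [← h] at hq1; simp only [Fin.val_succ] at hq1; omega
      have hne2 : i.castSucc ≠ q := fun h => by
        rw [← h] at hq1; simp only [Fin.coe_castSucc] at hq1; omega
      have e1 : lap A i.succ q = -A i.succ q := by
        simp only [lap, of_apply, if_neg hne1]
      have e2 : lap A i.castSucc q = -A i.castSucc q := by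
        simp only [lap, of_apply, if_neg hne2]
      have : A i.succ q < A i.castSucc q := by
        rw [hsym i.succ q, hsym i.castSucc q]
        exact h1 q i.castSucc i.succ (by simp) (by simp only [Fin.val_succ]; omega)
      simp only [hd, e1, e2]
      linarith
    · exact ⟨Fin.last n, Finset.mem_filter.mpr ⟨Finset.mem_univ _, by simpa using j.isLt⟩⟩
  · -- j < i : use zero row sums
    have hz : ∑ q, d q = 0 := by
      simp only [hd]
      rw [Finset.sum_sub_distrib, lap_rowsum, lap_rowsum, sub_self]
    have split : ∑ q : Fin (n+1), (if (j : ℕ) < (q : ℕ) then d q else 0) =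
        (∑ q, d q) - ∑ q : Fin (n+1), (if (q : ℕ) ≤ (j : ℕ) then d q else 0) := by
      rw [← Finset.sum_sub_distrib]
      refine Finset.sum_congr rfl fun q _ => ?_
      split_ifs with h h' h' <;> first | omega | ring
    rw [key, split, hz, zero_sub, ← Finset.sum_neg_distrib]
    rw [Finset.sum_congr rfl (fun (q : Fin (n+1)) _ => show
        -(if (q : ℕ) ≤ (j : ℕ) then d q else 0) =
          (if (q : ℕ) ≤ (j : ℕ) then -d q else 0) by split_ifs <;> ring)]
    rw [← Finset.sum_filter]
    apply Finset.sum_pos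
    · intro q hq
      have hqj : (q : ℕ) ≤ (j : ℕ) := (Finset.mem_filter.mp hq).2
      have hqi : (q : ℕ) < (i : ℕ) := by omega
      have hne1 : i.succ ≠ q := fun h => by
        rw [← h] at hqi; simp only [Fin.val_succ] at hqi; omega
      have hne2 : i.castSucc ≠ q := fun h => by
        rw [← h] at hqi; simp only [Fin.coe_castSucc] at hqi; omega
      have e1 : lap A i.succ q = -A i.succ q := by
        simp only [lap, of_apply, if_neg hne1]
      have e2 : lap A i.castSucc q = -A i.castSucc q := by
        simp only [lap, of_apply, if_neg hne2]
      have : A i.castSucc q < A i.succ q := by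
        rw [hsym i.succ q, hsym i.castSucc q]
        exact h2 q i.castSucc i.succ (by simpa using hqi) (by simp)
      simp only [hd, e1, e2]
      linarith
    · exact ⟨0, Finset.mem_filter.mpr ⟨Finset.mem_univ _, by simp⟩⟩
end

section
/- Let A be a symmetric nonnegative n×n real matrix with zero diagonal, satisfying a_{ij} ≤ a_{ik} whenever j < k < i and a_{ij} ≥ a_{ik} whenever i < j < k. Let 0 = λ_1 ≤ λ_2 ≤ ... ≤ λ_n be the eigenvalues of the Laplacian A^L. Then A^L has an eigenvector x corresponding to λ_2 (the second smallest eigenvalue) such that x is orthogonal to the all-ones vector and x_1 ≤ x_2 ≤ ... ≤ x_n. -/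
open Matrix Finset

variable {n : ℕ}


lemma lap_apply_ne {m : Type*} [Fintype m] [DecidableEq m] (A : Matrix m m ℝ) {i j : m}
    (h : i ≠ j) : lap A i j = -A i j := by simp [lap, h]

lemma lap_apply_diag {m : Type*} [Fintype m] [DecidableEq m] (A : Matrix m m ℝ) (i : m) :
    lap A i i = ∑ k ∈ Finset.univ.erase i, A i k := by
  simp [lap, Finset.filter_ne']

lemma lap_rowsum_s9 (A : Matrix (Fin (n+1)) (Fin (n+1)) ℝ) (i : Fin (n+1)) :
    ∑ j, lap A i j = 0 := by
  rw [← Finset.add_sum_erase _ _ (Finset.mem_univ i), lap_apply_diag,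
    Finset.sum_congr rfl (fun j hj => lap_apply_ne A (Finset.mem_erase.mp hj).1.symm)]
  simp

lemma lap_symm (A : Matrix (Fin (n+1)) (Fin (n+1)) ℝ) (hA : A.IsSymm) (i j : Fin (n+1)) :
    lap A i j = lap A j i := by
  rcases eq_or_ne i j with rfl | h
  · rfl
  · rw [lap_apply_ne A h, lap_apply_ne A h.symm, ← hA.apply i j]

lemma lap_mulVec_const (A : Matrix (Fin (n+1)) (Fin (n+1)) ℝ) (c : ℝ) :
    (lap A).mulVec (fun _ => c) = 0 := by
  funext i
  simp [Matrix.mulVec, dotProduct, ← Finset.sum_mul, lap_rowsum_s9]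

lemma sum_lap_mulVec (A : Matrix (Fin (n+1)) (Fin (n+1)) ℝ) (hA : A.IsSymm)
    (x : Fin (n+1) → ℝ) : ∑ i, (lap A).mulVec x i = 0 := by
  simp only [Matrix.mulVec, dotProduct]
  rw [Finset.sum_comm]
  have : ∀ j : Fin (n+1), ∑ i, lap A i j * x j = 0 := by
    intro j
    rw [← Finset.sum_mul]
    rw [Finset.sum_congr rfl (fun i _ => lap_symm A hA i j), lap_rowsum_s9, zero_mul]
  simp [this]

lemma Smat_apply (k : Fin n) (j : Fin (n+1)) :
    Smat n k j = (if j = k.succ then (1:ℝ) else 0) - (if j = k.castSucc then 1 else 0) := by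
  simp only [Smat, Matrix.of_apply, Fin.ext_iff, Fin.val_succ, Fin.coe_castSucc]
  split_ifs <;> simp_all <;> omega

lemma Smat_mulVec (v : Fin (n+1) → ℝ) (k : Fin n) :
    (Smat n).mulVec v k = v k.succ - v k.castSucc := by
  simp [Matrix.mulVec, dotProduct, Smat_apply, sub_mul, ite_mul,
    Finset.sum_sub_distrib, Finset.sum_ite_eq']

lemma Tmat_mulVec (w : Fin n → ℝ) (i : Fin (n+1)) :
    (Tmat n).mulVec w i = ∑ l ∈ Finset.univ.filter (fun l : Fin n => (l:ℕ) < (i:ℕ)), w l := by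
  simp [Matrix.mulVec, dotProduct, Tmat, ite_mul, Finset.sum_filter]

lemma filter_cast_sum (i : Fin (n+1)) (g : ℕ → ℝ) :
    ∑ l ∈ Finset.univ.filter (fun l : Fin n => (l:ℕ) < (i:ℕ)), g (l:ℕ)
      = ∑ m ∈ Finset.range (i:ℕ), g m := by
  rw [Finset.sum_filter, Fin.sum_univ_eq_sum_range (fun m => if m < (i:ℕ) then g m else 0),
    ← Finset.sum_filter]
  congr 1
  ext m
  simp only [Finset.mem_filter, Finset.mem_range]
  omega

lemma TS_mulVec (v : Fin (n+1) → ℝ) (i : Fin (n+1)) :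
    (Tmat n).mulVec ((Smat n).mulVec v) i = v i - v 0 := by
  rw [Tmat_mulVec]
  set f : ℕ → ℝ := fun m => if h : m < n+1 then v ⟨m, h⟩ else 0 with hf
  have hfe : ∀ (m : ℕ) (h : m < n+1), f m = v ⟨m, h⟩ := by
    intro m h; rw [hf]; exact dif_pos h
  have key : ∀ l : Fin n, (Smat n).mulVec v l = f ((l:ℕ)+1) - f (l:ℕ) := by
    intro l
    rw [Smat_mulVec, hfe _ (by omega), hfe _ (by omega)]
    exact congrArg₂ (· - ·) (congrArg v (Fin.ext rfl)) (congrArg v (Fin.ext rfl))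
  rw [Finset.sum_congr rfl (fun l _ => key l),
    filter_cast_sum i (fun m => f (m+1) - f m), Finset.sum_range_sub]
  rw [hfe _ i.isLt, hfe _ (by omega : 0 < n+1)]
  exact congrArg₂ (· - ·) (congrArg v (Fin.ext rfl)) (congrArg v (Fin.ext rfl))

lemma ST_mulVec (w : Fin n → ℝ) :
    (Smat n).mulVec ((Tmat n).mulVec w) = w := by
  funext k
  rw [Smat_mulVec, Tmat_mulVec, Tmat_mulVec]
  rw [Finset.sum_filter, Finset.sum_filter, ← Finset.sum_sub_distrib]
  have : ∀ l : Fin n,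
      ((if (l:ℕ) < (k.succ:ℕ) then w l else 0) - (if (l:ℕ) < (k.castSucc:ℕ) then w l else 0))
        = if l = k then w l else 0 := by
    intro l
    simp only [Fin.val_succ, Fin.coe_castSucc, Fin.ext_iff]
    split_ifs <;> simp_all <;> omega
  rw [Finset.sum_congr rfl (fun l _ => this l), Finset.sum_ite_eq']
  simp

lemma LT_apply (A : Matrix (Fin (n+1)) (Fin (n+1)) ℝ) (i : Fin (n+1)) (l : Fin n) :
    (lap A * Tmat n) i l
      = ∑ j ∈ Finset.univ.filter (fun j : Fin (n+1) => (l:ℕ) < (j:ℕ)), lap A i j := by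
  simp [Matrix.mul_apply, Tmat, mul_ite, Finset.sum_filter]

lemma LT_low (A : Matrix (Fin (n+1)) (Fin (n+1)) ℝ) {i : Fin (n+1)} {l : Fin n}
    (h : (i:ℕ) ≤ (l:ℕ)) :
    (lap A * Tmat n) i l
      = -∑ j ∈ Finset.univ.filter (fun j : Fin (n+1) => (l:ℕ) < (j:ℕ)), A i j := by
  rw [LT_apply, ← Finset.sum_neg_distrib]
  refine Finset.sum_congr rfl fun j hj => ?_
  have : (l:ℕ) < (j:ℕ) := (Finset.mem_filter.mp hj).2
  exact lap_apply_ne A (by intro e; rw [e] at h; omega)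

lemma LT_high (A : Matrix (Fin (n+1)) (Fin (n+1)) ℝ) {i : Fin (n+1)} {l : Fin n}
    (h : (l:ℕ) < (i:ℕ)) :
    (lap A * Tmat n) i l
      = ∑ j ∈ Finset.univ.filter (fun j : Fin (n+1) => (j:ℕ) ≤ (l:ℕ)), A i j := by
  have hsplit := Finset.sum_filter_add_sum_filter_not Finset.univ
    (fun j : Fin (n+1) => (l:ℕ) < (j:ℕ)) (lap A i)
  rw [lap_rowsum_s9 A i] at hsplit
  rw [LT_apply]
  have h2 : (Finset.univ.filter (fun j : Fin (n+1) => ¬ (l:ℕ) < (j:ℕ)))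
      = Finset.univ.filter (fun j : Fin (n+1) => (j:ℕ) ≤ (l:ℕ)) := by
    congr 1; ext j; omega
  have h3 : ∑ j ∈ Finset.univ.filter (fun j : Fin (n+1) => (j:ℕ) ≤ (l:ℕ)), lap A i j
      = -∑ j ∈ Finset.univ.filter (fun j : Fin (n+1) => (j:ℕ) ≤ (l:ℕ)), A i j := by
    rw [← Finset.sum_neg_distrib]
    refine Finset.sum_congr rfl fun j hj => ?_
    have : (j:ℕ) ≤ (l:ℕ) := (Finset.mem_filter.mp hj).2
    exact lap_apply_ne A (by intro e; rw [← e] at this; omega)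
  rw [h2, h3] at hsplit
  linarith

lemma Smat_mul_apply (M : Matrix (Fin (n+1)) (Fin n) ℝ) (k l : Fin n) :
    (Smat n * M) k l = M k.succ l - M k.castSucc l := by
  have := Smat_mulVec (fun j => M j l) k
  simpa [Matrix.mul_apply, Matrix.mulVec, dotProduct] using this

lemma Cmat_offdiag (A : Matrix (Fin (n+1)) (Fin (n+1)) ℝ) (hA : A.IsSymm)
    (h1 : ∀ i j k : Fin (n + 1), (j : ℕ) < k → (k : ℕ) < i → A i j ≤ A i k)
    (h2 : ∀ i j k : Fin (n + 1), (i : ℕ) < j → (j : ℕ) < k → A i k ≤ A i j)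
    (k l : Fin n) (hkl : k ≠ l) : (Smat n * lap A * Tmat n) k l ≤ 0 := by
  rw [Matrix.mul_assoc, Smat_mul_apply]
  rcases lt_or_gt_of_ne (fun e => hkl (Fin.ext e) : (k:ℕ) ≠ (l:ℕ)) with h | h
  · rw [LT_low A (by simp; omega), LT_low A (by simp; omega), ← Finset.sum_neg_distrib,
      ← Finset.sum_neg_distrib, ← Finset.sum_sub_distrib]
    refine Finset.sum_nonpos fun j hj => ?_
    have hlj : (l:ℕ) < (j:ℕ) := (Finset.mem_filter.mp hj).2
    have : A k.castSucc j ≤ A k.succ j := by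
      rw [← hA.apply k.castSucc j, ← hA.apply k.succ j]
      exact h1 j k.castSucc k.succ (by simp) (by simp; omega)
    linarith
  · rw [LT_high A (by simp; omega), LT_high A (by simp; omega), ← Finset.sum_sub_distrib]
    refine Finset.sum_nonpos fun j hj => ?_
    have hjl : (j:ℕ) ≤ (l:ℕ) := (Finset.mem_filter.mp hj).2
    have : A k.succ j ≤ A k.castSucc j := by
      rw [← hA.apply k.castSucc j, ← hA.apply k.succ j]
      exact h2 j k.castSucc k.succ (by simp; omega) (by simp)
    linarith

lemma eigC (A : Matrix (Fin (n+1)) (Fin (n+1)) ℝ) (lam : ℝ) (x : Fin (n+1) → ℝ)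
    (hx : (lap A).mulVec x = lam • x) :
    (Smat n * lap A * Tmat n).mulVec ((Smat n).mulVec x)
      = lam • (Smat n).mulVec x := by
  rw [← Matrix.mulVec_mulVec, ← Matrix.mulVec_mulVec]
  have hTS : (Tmat n).mulVec ((Smat n).mulVec x) = fun i => x i - x 0 := by
    funext i; exact TS_mulVec x i
  rw [hTS]
  have : (fun i => x i - x 0) = x - (fun _ => x 0) := rfl
  rw [this, Matrix.mulVec_sub, lap_mulVec_const, sub_zero, hx, Matrix.mulVec_smul]

lemma lap_isSymm (A : Matrix (Fin (n+1)) (Fin (n+1)) ℝ) (hA : A.IsSymm) :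
    (lap A).IsSymm := by
  ext i j
  exact lap_symm A hA j i

lemma symm_dot (A : Matrix (Fin (n+1)) (Fin (n+1)) ℝ) (hA : A.IsSymm)
    (u w : Fin (n+1) → ℝ) :
    ∑ t, u t * (lap A).mulVec w t = ∑ t, (lap A).mulVec u t * w t := by
  simp only [Matrix.mulVec, dotProduct, Finset.mul_sum, Finset.sum_mul]
  rw [Finset.sum_comm]
  refine Finset.sum_congr rfl fun s _ => Finset.sum_congr rfl fun t _ => ?_
  rw [lap_symm A hA t s]; ring

lemma eig_lb (A : Matrix (Fin (n+1)) (Fin (n+1)) ℝ) (hA : A.IsSymm) (lam2 : ℝ)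
    (hmin : ∀ μ : ℝ,
      (∃ x : Fin (n + 1) → ℝ, x ≠ 0 ∧ (lap A).mulVec x = μ • x ∧ ∑ i, x i = 0) →
      lam2 ≤ μ)
    (μi : ℝ) (v : Fin (n+1) → ℝ) (hv : (lap A).mulVec v = μi • v)
    (hnorm : ∑ t, v t * v t = 1) (y : Fin (n+1) → ℝ) (hy : ∑ i, y i = 0)
    (hc : ∑ t, v t * y t ≠ 0) : lam2 ≤ μi := by
  have hv0 : v ≠ 0 := by
    intro h; rw [h] at hnorm; simp at hnorm
  by_cases hs : ∑ t, v t = 0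
  · exact hmin μi ⟨v, hv0, hv, hs⟩
  · -- v not orthogonal to 1; then μi = 0
    have hμ0 : μi = 0 := by
      have h1 := sum_lap_mulVec A hA v
      rw [hv] at h1
      simp only [Pi.smul_apply, smul_eq_mul, ← Finset.mul_sum] at h1
      exact (mul_eq_zero.mp h1).resolve_right hs
    set s : ℝ := ∑ t, v t with hsdef
    set u : Fin (n+1) → ℝ := fun j => v j - s / (n+1) with hu
    have hn1 : ((n:ℝ)+1) ≠ 0 := by positivity
    by_cases hu0 : u = 0
    · -- v is constant, contradicting hc
      exfalso
      apply hc
      have hvc : ∀ j, v j = s / (n+1) := by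
        intro j
        have := congrFun hu0 j
        simp only [hu, Pi.zero_apply] at this
        linarith
      calc ∑ t, v t * y t = ∑ t, (s/(n+1)) * y t :=
            Finset.sum_congr rfl fun t _ => by rw [hvc t]
        _ = (s/(n+1)) * ∑ t, y t := by rw [Finset.mul_sum]
        _ = 0 := by rw [hy, mul_zero]
    · have hLu : (lap A).mulVec u = (0:ℝ) • u := by
        have : u = v - (fun _ => s / (n+1)) := rfl
        rw [this, Matrix.mulVec_sub, lap_mulVec_const, sub_zero, hv, hμ0]
        simp
      have hsu : ∑ j, u j = 0 := by
        simp only [hu, Finset.sum_sub_distrib, ← hsdef, Finset.sum_const,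
          Finset.card_univ, Fintype.card_fin, nsmul_eq_mul]
        push_cast
        field_simp
        ring
      have := hmin 0 ⟨u, hu0, hLu, hsu⟩
      rw [hμ0]
      exact this

lemma stepA (A : Matrix (Fin (n+1)) (Fin (n+1)) ℝ) (hA : A.IsSymm) (lam2 : ℝ)
    (hmin : ∀ μ : ℝ,
      (∃ x : Fin (n + 1) → ℝ, x ≠ 0 ∧ (lap A).mulVec x = μ • x ∧ ∑ i, x i = 0) →
      lam2 ≤ μ)
    (y : Fin (n+1) → ℝ) (hy : ∑ i, y i = 0) :
    lam2 * (∑ i, y i * y i) ≤ ∑ i, y i * (lap A).mulVec y i := by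
  have hL : (lap A).IsHermitian := by
    rw [Matrix.IsHermitian, Matrix.conjTranspose_eq_transpose_of_trivial]
    exact lap_isSymm A hA
  set b := hL.eigenvectorBasis with hb
  set μ := hL.eigenvalues with hμ
  set v : Fin (n+1) → (Fin (n+1) → ℝ) := fun i t => b i t with hv
  have he : ∀ i, (lap A).mulVec (v i) = μ i • v i := fun i => hL.mulVec_eigenvectorBasis i
  have horth : ∀ i j : Fin (n+1), ∑ t, v i t * v j t = if i = j then 1 else 0 := by
    intro i j
    have h := (orthonormal_iff_ite.mp b.orthonormal) i j
    simp [PiLp.inner_apply, RCLike.inner_apply, conj_trivial] at h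
    rw [← h]; exact Finset.sum_congr rfl fun t _ => mul_comm _ _
  set c : Fin (n+1) → ℝ := fun i => ∑ t, v i t * y t with hcdef
  -- decomposition of y
  set Y : EuclideanSpace ℝ (Fin (n+1)) := (WithLp.equiv 2 (Fin (n+1) → ℝ)).symm y with hY
  have hsum := b.sum_repr Y
  have hrepr : ∀ i, b.repr Y i = c i := by
    intro i
    rw [b.repr_apply_apply]
    simp only [PiLp.inner_apply, RCLike.inner_apply, conj_trivial]
    exact Finset.sum_congr rfl fun t _ => mul_comm _ _
  have hdec : ∀ t, y t = ∑ i, c i * v i t := by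
    intro t
    have h1 := congrFun
      (congrArg (fun (z : EuclideanSpace ℝ (Fin (n+1))) => (z : Fin (n+1) → ℝ)) hsum) t
    simp only [hrepr] at h1
    have h2 : Y t = y t := rfl
    rw [h2] at h1
    rw [← h1]
    have h3 : (WithLp.linearEquiv 2 ℝ (Fin (n+1) → ℝ)) (∑ x : Fin (n+1), c x • b x)
        = ∑ x : Fin (n+1), c x • ((WithLp.linearEquiv 2 ℝ (Fin (n+1) → ℝ)) (b x)) := by
      rw [map_sum]
      exact Finset.sum_congr rfl fun x _ => by rw [_root_.map_smul]
    exact (congrFun h3 t).trans (by simp [Finset.sum_apply]; rfl)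
  -- expansions
  have hyy : ∑ t, y t * y t = ∑ i, c i * c i := by
    calc ∑ t, y t * y t = ∑ t, y t * (∑ i, c i * v i t) :=
          Finset.sum_congr rfl fun t _ => by rw [← hdec t]
      _ = ∑ t, ∑ i, c i * (v i t * y t) := by
          refine Finset.sum_congr rfl fun t _ => ?_
          rw [Finset.mul_sum]
          exact Finset.sum_congr rfl fun i _ => by ring
      _ = ∑ i, ∑ t, c i * (v i t * y t) := Finset.sum_comm
      _ = ∑ i, c i * c i := by
          refine Finset.sum_congr rfl fun i _ => ?_
          rw [← Finset.mul_sum, hcdef]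
  have hLyy : ∑ t, y t * (lap A).mulVec y t = ∑ i, μ i * (c i * c i) := by
    calc ∑ t, y t * (lap A).mulVec y t
        = ∑ t, (∑ i, c i * v i t) * (lap A).mulVec y t :=
          Finset.sum_congr rfl fun t _ => by rw [← hdec t]
      _ = ∑ t, ∑ i, c i * (v i t * (lap A).mulVec y t) := by
          refine Finset.sum_congr rfl fun t _ => ?_
          rw [Finset.sum_mul]
          exact Finset.sum_congr rfl fun i _ => by ring
      _ = ∑ i, ∑ t, c i * (v i t * (lap A).mulVec y t) := Finset.sum_comm
      _ = ∑ i, c i * (∑ t, v i t * (lap A).mulVec y t) := by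
          refine Finset.sum_congr rfl fun i _ => by rw [← Finset.mul_sum]
      _ = ∑ i, μ i * (c i * c i) := by
          refine Finset.sum_congr rfl fun i _ => ?_
          rw [symm_dot A hA (v i) y, he i]
          have : ∑ t, (μ i • v i) t * y t = μ i * c i := by
            simp only [Pi.smul_apply, smul_eq_mul, hcdef, Finset.mul_sum]
            exact Finset.sum_congr rfl fun t _ => by ring
          rw [this]; ring
  rw [hyy, hLyy, Finset.mul_sum]
  refine Finset.sum_le_sum fun i _ => ?_
  rcases eq_or_ne (c i) 0 with h0 | h0
  · rw [h0]; simp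
  · have hlam : lam2 ≤ μ i := by
      refine eig_lb A hA lam2 hmin (μ i) (v i) (he i) ?_ y hy h0
      have := horth i i
      simpa using this
    nlinarith [mul_self_nonneg (c i)]

lemma tail_pos (y : Fin (n+1) → ℝ) (hmono : Monotone y) (hsum : ∑ i, y i = 0)
    (hy0 : y ≠ 0) (l : Fin n) :
    0 < ∑ i ∈ Finset.univ.filter (fun i : Fin (n+1) => (l:ℕ) < (i:ℕ)), y i := by
  -- there is a positive entry
  obtain ⟨p, hp⟩ : ∃ p, 0 < y p := by
    by_contra h
    push_neg at h
    apply hy0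
    funext i
    have := (Finset.sum_eq_zero_iff_of_nonpos (fun i _ => h i)).mp hsum i (Finset.mem_univ i)
    exact this
  have hlast : 0 < y (Fin.last n) := lt_of_lt_of_le hp (hmono (Fin.le_last p))
  have hlmem : Fin.last n ∈ Finset.univ.filter (fun i : Fin (n+1) => (l:ℕ) < (i:ℕ)) := by
    simp only [Finset.mem_filter, Finset.mem_univ, true_and, Fin.val_last]
    exact l.isLt
  rcases le_or_gt 0 (y l.succ) with h0 | h0
  · -- all tail entries nonneg, last is positive
    rw [← Finset.add_sum_erase _ _ hlmem]
    have : 0 ≤ ∑ i ∈ (Finset.univ.filter (fun i : Fin (n+1) => (l:ℕ) < (i:ℕ))).erase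
        (Fin.last n), y i := by
      refine Finset.sum_nonneg fun i hi => ?_
      have hli : (l:ℕ) < (i:ℕ) := (Finset.mem_filter.mp (Finset.mem_erase.mp hi).2).2
      have : l.succ ≤ i := by
        rw [Fin.le_def]
        simp
        omega
      exact le_trans h0 (hmono this)
    linarith
  · -- head sum is negative
    have hsplit := Finset.sum_filter_add_sum_filter_not Finset.univ
      (fun i : Fin (n+1) => (l:ℕ) < (i:ℕ)) y
    rw [hsum] at hsplit
    have hhead : ∑ i ∈ Finset.univ.filter (fun i : Fin (n+1) => ¬ (l:ℕ) < (i:ℕ)), y i < 0 := by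
      have h0mem : (0 : Fin (n+1)) ∈ Finset.univ.filter
          (fun i : Fin (n+1) => ¬ (l:ℕ) < (i:ℕ)) := by simp
      have hneg : ∀ i ∈ Finset.univ.filter (fun i : Fin (n+1) => ¬ (l:ℕ) < (i:ℕ)), y i ≤ y l.succ := by
        intro i hi
        have : (i:ℕ) ≤ (l:ℕ) := by
          have := (Finset.mem_filter.mp hi).2
          omega
        refine hmono ?_
        rw [Fin.le_def]
        simp
        omega
      calc ∑ i ∈ Finset.univ.filter (fun i : Fin (n+1) => ¬ (l:ℕ) < (i:ℕ)), y i
          ≤ ∑ _i ∈ Finset.univ.filter (fun i : Fin (n+1) => ¬ (l:ℕ) < (i:ℕ)), y l.succ :=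
            Finset.sum_le_sum hneg
        _ = (Finset.univ.filter (fun i : Fin (n+1) => ¬ (l:ℕ) < (i:ℕ))).card • y l.succ := by
            rw [Finset.sum_const]
        _ < 0 := by
            have hcard : 0 < (Finset.univ.filter
                (fun i : Fin (n+1) => ¬ (l:ℕ) < (i:ℕ))).card :=
              Finset.card_pos.mpr ⟨0, h0mem⟩
            rw [nsmul_eq_mul]
            exact mul_neg_of_pos_of_neg (by exact_mod_cast hcard) h0
    linarith

lemma dot_Tmul (y : Fin (n+1) → ℝ) (u : Fin n → ℝ) :
    ∑ i, y i * (Tmat n).mulVec u i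
      = ∑ l, u l * (∑ i ∈ Finset.univ.filter (fun i : Fin (n+1) => (l:ℕ) < (i:ℕ)), y i) := by
  simp only [Tmat_mulVec, Finset.sum_filter, Finset.mul_sum]
  rw [Finset.sum_comm]
  refine Finset.sum_congr rfl fun l _ => Finset.sum_congr rfl fun i _ => ?_
  split_ifs <;> ring

theorem monotone_eigvec_second_smallest' (A : Matrix (Fin (n + 1)) (Fin (n + 1)) ℝ)
    (hA : A.IsSymm) (hnn : ∀ i j, 0 ≤ A i j) (hdiag : ∀ i, A i i = 0)
    (h1 : ∀ i j k : Fin (n + 1), (j : ℕ) < k → (k : ℕ) < i → A i j ≤ A i k)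
    (h2 : ∀ i j k : Fin (n + 1), (i : ℕ) < j → (j : ℕ) < k → A i k ≤ A i j)
    (lam2 : ℝ)
    (hev : ∃ x : Fin (n + 1) → ℝ, x ≠ 0 ∧ (lap A).mulVec x = lam2 • x ∧ ∑ i, x i = 0)
    (hmin : ∀ μ : ℝ,
      (∃ x : Fin (n + 1) → ℝ, x ≠ 0 ∧ (lap A).mulVec x = μ • x ∧ ∑ i, x i = 0) →
      lam2 ≤ μ) :
    ∃ x : Fin (n + 1) → ℝ, x ≠ 0 ∧ (lap A).mulVec x = lam2 • x ∧
      (∑ i, x i = 0) ∧ Monotone x := by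
  obtain ⟨x, hx0, hxe, hxs⟩ := hev
  set z := (Smat n).mulVec x with hz
  have hz0 : z ≠ 0 := by
    intro h
    apply hx0
    have hxc : ∀ i, x i = x 0 := by
      intro i
      have h2' := TS_mulVec x i
      rw [← hz, h, Matrix.mulVec_zero] at h2'
      have : (0:ℝ) = x i - x 0 := h2'
      linarith
    have hsum0 : ∑ i, x i = (n+1 : ℝ) * x 0 := by
      rw [Finset.sum_congr rfl (fun i _ => hxc i)]
      simp [Finset.sum_const, Finset.card_univ, mul_comm]
    rw [hxs] at hsum0
    have hx00 : x 0 = 0 := by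
      have hn1 : ((n:ℝ)+1) ≠ 0 := by positivity
      field_simp at hsum0
      exact (mul_eq_zero.mp hsum0.symm).resolve_left hn1
    funext i
    rw [hxc i, hx00]
    rfl
  set w : Fin n → ℝ := fun k => |z k| with hw
  have hw0 : w ≠ 0 := by
    intro h
    apply hz0
    funext k
    have := congrFun h k
    simp only [hw, Pi.zero_apply] at this
    exact abs_eq_zero.mp this
  set C := Smat n * lap A * Tmat n with hC
  have hCz : C.mulVec z = lam2 • z := eigC A lam2 x hxe
  -- B = c0 I - C is entrywise nonnegative
  set c0 : ℝ := lam2 + ∑ k, |C k k - lam2| with hc0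
  have hc0lam : lam2 ≤ c0 := by
    have : 0 ≤ ∑ k, |C k k - lam2| := Finset.sum_nonneg fun k _ => abs_nonneg _
    linarith
  set B : Matrix (Fin n) (Fin n) ℝ := fun k l => if k = l then c0 - C k l else -C k l with hB
  have hBnn : ∀ k l, 0 ≤ B k l := by
    intro k l
    rw [hB]
    rcases eq_or_ne k l with rfl | hne
    · simp only [if_pos rfl, eq_self_iff_true, if_true]
      have h1' : |C k k - lam2| ≤ ∑ k', |C k' k' - lam2| :=
        Finset.single_le_sum (f := fun k' => |C k' k' - lam2|)
          (fun k' _ => abs_nonneg _) (Finset.mem_univ k)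
      have h2' : C k k - lam2 ≤ |C k k - lam2| := le_abs_self _
      simp only [hc0]
      linarith
    · simp only [if_neg hne]
      have := Cmat_offdiag A hA h1 h2 k l hne
      rw [← hC] at this
      linarith
  have hBC : ∀ v : Fin n → ℝ, ∀ k, B.mulVec v k = c0 * v k - C.mulVec v k := by
    intro v k
    simp only [Matrix.mulVec, dotProduct, hB]
    have he : ∀ l, (if k = l then c0 - C k l else -C k l) * v l
        = (if k = l then c0 * v l else 0) - C k l * v l := by
      intro l; split_ifs <;> ring
    rw [Finset.sum_congr rfl fun l _ => he l, Finset.sum_sub_distrib, Finset.sum_ite_eq]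
    simp
  -- key inequality : C w ≤ lam2 w entrywise
  have hkey : ∀ k, C.mulVec w k ≤ lam2 * w k := by
    intro k
    have habs : |B.mulVec z k| ≤ B.mulVec w k := by
      simp only [Matrix.mulVec, dotProduct]
      calc |∑ l, B k l * z l| ≤ ∑ l, |B k l * z l| := Finset.abs_sum_le_sum_abs _ _
        _ = ∑ l, B k l * w l := by
            refine Finset.sum_congr rfl fun l _ => ?_
            rw [abs_mul, abs_of_nonneg (hBnn k l)]
    have hBz : B.mulVec z k = (c0 - lam2) * z k := by
      rw [hBC z k]
      have := congrFun hCz k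
      simp only [Pi.smul_apply, smul_eq_mul] at this
      rw [this]
      ring
    rw [hBz, hBC w k] at habs
    have : |(c0 - lam2) * z k| = (c0 - lam2) * w k := by
      rw [abs_mul, abs_of_nonneg (by linarith : (0:ℝ) ≤ c0 - lam2)]
    rw [this] at habs
    linarith
  set d : Fin n → ℝ := fun k => lam2 * w k - C.mulVec w k with hd
  have hdnn : ∀ k, 0 ≤ d k := fun k => by simp only [hd]; linarith [hkey k]
  -- build y
  set g := (Tmat n).mulVec w with hg
  set m : ℝ := (∑ i, g i) / (n+1) with hm
  set y : Fin (n+1) → ℝ := fun i => g i - m with hy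
  have hn1 : ((n:ℝ)+1) ≠ 0 := by positivity
  have hys : ∑ i, y i = 0 := by
    simp only [hy, Finset.sum_sub_distrib, Finset.sum_const, Finset.card_univ,
      Fintype.card_fin, nsmul_eq_mul, hm]
    push_cast
    field_simp
    ring
  have hgdiff : ∀ k : Fin n, g k.succ - g k.castSucc = w k := by
    intro k
    have hst := congrFun (ST_mulVec w) k
    rw [Smat_mulVec ((Tmat n).mulVec w) k] at hst
    rw [hg]
    exact hst
  have hymono : Monotone y := by
    rw [Fin.monotone_iff_le_succ]
    intro k
    simp only [hy]
    have := hgdiff k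
    have hwk : 0 ≤ w k := abs_nonneg _
    linarith
  have hy0 : y ≠ 0 := by
    intro h
    apply hw0
    funext k
    have h1' := congrFun h k.succ
    have h2' := congrFun h k.castSucc
    simp only [hy, Pi.zero_apply] at h1' h2'
    have := hgdiff k
    simp only [Pi.zero_apply]
    linarith
  -- q = lap y
  set q := (lap A).mulVec g with hq
  have hyq : (lap A).mulVec y = q := by
    have : y = g - (fun _ => m) := rfl
    rw [this, Matrix.mulVec_sub, lap_mulVec_const, sub_zero, hq]
  have hSq : (Smat n).mulVec q = fun k => lam2 * w k - d k := by
    funext k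
    have hCw : C.mulVec w = (Smat n).mulVec ((lap A).mulVec ((Tmat n).mulVec w)) := by
      rw [hC, ← Matrix.mulVec_mulVec, ← Matrix.mulVec_mulVec]
    have : C.mulVec w k = lam2 * w k - d k := by simp only [hd]; ring
    rw [← this, hCw, hq, hg]
  have hqr : ∀ i, q i = (Tmat n).mulVec (fun k => lam2 * w k - d k) i + q 0 := by
    intro i
    have := TS_mulVec q i
    rw [hSq] at this
    linarith
  -- apply stepA to get d = 0
  have hstep := stepA A hA lam2 hmin y hys
  rw [hyq] at hstep
  have hyg : ∑ i, y i * g i = ∑ i, y i * y i := by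
    have : ∀ i, y i * g i = y i * y i + m * y i := by
      intro i; simp only [hy]; ring
    rw [Finset.sum_congr rfl fun i _ => this i, Finset.sum_add_distrib, ← Finset.mul_sum, hys,
      mul_zero, add_zero]
  have hyqsum : ∑ i, y i * q i
      = lam2 * (∑ i, y i * y i) - ∑ l, d l *
        (∑ i ∈ Finset.univ.filter (fun i : Fin (n+1) => (l:ℕ) < (i:ℕ)), y i) := by
    have e1 : ∀ i, y i * q i = y i * (Tmat n).mulVec (fun k => lam2 * w k - d k) i + q 0 * y i := by
      intro i; rw [hqr i]; ring
    rw [Finset.sum_congr rfl fun i _ => e1 i, Finset.sum_add_distrib, ← Finset.mul_sum, hys,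
      mul_zero, add_zero, dot_Tmul]
    have e2 : ∀ l, (lam2 * w l - d l) *
        (∑ i ∈ Finset.univ.filter (fun i : Fin (n+1) => (l:ℕ) < (i:ℕ)), y i)
        = lam2 * (w l * (∑ i ∈ Finset.univ.filter (fun i : Fin (n+1) => (l:ℕ) < (i:ℕ)), y i))
          - d l * (∑ i ∈ Finset.univ.filter (fun i : Fin (n+1) => (l:ℕ) < (i:ℕ)), y i) := by
      intro l; ring
    rw [Finset.sum_congr rfl fun l _ => e2 l, Finset.sum_sub_distrib, ← Finset.mul_sum,
      ← dot_Tmul, ← hg, hyg]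
  rw [hyqsum] at hstep
  have hdsum : ∑ l, d l *
      (∑ i ∈ Finset.univ.filter (fun i : Fin (n+1) => (l:ℕ) < (i:ℕ)), y i) ≤ 0 := by linarith
  have hterm : ∀ l, 0 ≤ d l *
      (∑ i ∈ Finset.univ.filter (fun i : Fin (n+1) => (l:ℕ) < (i:ℕ)), y i) :=
    fun l => mul_nonneg (hdnn l) (le_of_lt (tail_pos y hymono hys hy0 l))
  have hdzero : ∀ l, d l = 0 := by
    intro l
    have hsum0 : ∑ l, d l *
        (∑ i ∈ Finset.univ.filter (fun i : Fin (n+1) => (l:ℕ) < (i:ℕ)), y i) = 0 :=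
      le_antisymm hdsum (Finset.sum_nonneg fun l _ => hterm l)
    have := (Finset.sum_eq_zero_iff_of_nonneg fun l _ => hterm l).mp hsum0 l (Finset.mem_univ l)
    rcases mul_eq_zero.mp this with h | h
    · exact h
    · exact absurd h (ne_of_gt (tail_pos y hymono hys hy0 l))
  -- conclude q = lam2 • y
  have hTw0 : ∀ i, q i = lam2 * g i + q 0 := by
    intro i
    have := hqr i
    have e : (Tmat n).mulVec (fun k => lam2 * w k - d k) i = lam2 * g i := by
      have : (fun k => lam2 * w k - d k) = fun k => lam2 * w k := by
        funext k; rw [hdzero k]; ring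
      rw [this]
      have : (fun k => lam2 * w k) = lam2 • w := rfl
      rw [this, Matrix.mulVec_smul, ← hg]
      rfl
    rw [e] at this
    exact this
  have hq0 : q 0 = -lam2 * m := by
    have hqs : ∑ i, q i = 0 := by rw [hq]; exact sum_lap_mulVec A hA g
    have : ∑ i, q i = lam2 * (∑ i, g i) + (n+1 : ℝ) * q 0 := by
      rw [Finset.sum_congr rfl fun i _ => hTw0 i, Finset.sum_add_distrib, ← Finset.mul_sum,
        Finset.sum_const, Finset.card_univ, Fintype.card_fin, nsmul_eq_mul]
      push_cast
      ring
    rw [hqs] at this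
    rw [hm]
    field_simp
    linarith
  have hfinal : (lap A).mulVec y = lam2 • y := by
    rw [hyq]
    funext i
    rw [hTw0 i, hq0]
    simp only [Pi.smul_apply, smul_eq_mul, hy]
    ring
  exact ⟨y, hy0, hfinal, hys, hymono⟩

theorem monotone_eigvec_second_smallest (n : ℕ) (A : Matrix (Fin (n + 1)) (Fin (n + 1)) ℝ)
    (hA : A.IsSymm) (hnn : ∀ i j, 0 ≤ A i j) (hdiag : ∀ i, A i i = 0)
    (h1 : ∀ i j k : Fin (n + 1), (j : ℕ) < k → (k : ℕ) < i → A i j ≤ A i k)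
    (h2 : ∀ i j k : Fin (n + 1), (i : ℕ) < j → (j : ℕ) < k → A i k ≤ A i j)
    (lam2 : ℝ)
    -- lam2 is the second smallest eigenvalue of the Laplacian: it is the smallest
    -- eigenvalue having an eigenvector orthogonal to the all-ones vector
    (hev : ∃ x : Fin (n + 1) → ℝ, x ≠ 0 ∧ (lap A).mulVec x = lam2 • x ∧ ∑ i, x i = 0)
    (hmin : ∀ μ : ℝ,
      (∃ x : Fin (n + 1) → ℝ, x ≠ 0 ∧ (lap A).mulVec x = μ • x ∧ ∑ i, x i = 0) →
      lam2 ≤ μ) :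
    ∃ x : Fin (n + 1) → ℝ, x ≠ 0 ∧ (lap A).mulVec x = lam2 • x ∧
      (∑ i, x i = 0) ∧ Monotone x :=
  monotone_eigvec_second_smallest' A hA hnn hdiag h1 h2 lam2 hev hmin
end
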